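/- Let $F(x,y,z) = \frac{a}{x} + \frac{b}{y} + \frac{c}{z} - d\frac{x}{y^2} - e\frac{x}{z^2} - f\frac{y}{z^2}$ and $G(x,y,z) = x^p y^q z^r$, with all constants $a,b,c,d,e,f,p,q,r$ positive. Suppose $(x,y,z)$ with $x,y,z > 0$ is a critical point of $F$ restricted to a level set of $G$ (i.e., $\nabla F$ is parallel to $\nabla G$ at $(x,y,z)$), and suppose $x = y$. Then $r(a+d)z^2 - pcxz + e(2p+2q+r)x^2 = 0$. -/

import Mathlib

theorem stmt_11 (a b c d e f p q r : ℝ)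
    (ha : 0 < a) (hb : 0 < b) (hc : 0 < c) (hd : 0 < d) (he : 0 < e)
    (hf : 0 < f) (hp : 0 < p) (hq : 0 < q) (hr : 0 < r)
    (hdval : d = (p * b - q * a) / (q + 2 * p)) (hfval : f = q * e / p)
    (F G : ℝ × ℝ × ℝ → ℝ)
    (hF : ∀ v : ℝ × ℝ × ℝ, F v =
      a / v.1 + b / v.2.1 + c / v.2.2 - d * (v.1 / v.2.1^2)
        - e * (v.1 / v.2.2^2) - f * (v.2.1 / v.2.2^2))
    (hG : ∀ v : ℝ × ℝ × ℝ, G v = v.1 ^ p * v.2.1 ^ q * v.2.2 ^ r)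
    (x y z : ℝ) (hx : 0 < x) (hy : 0 < y) (hz : 0 < z)
    (hcrit : ∃ lam : ℝ, fderiv ℝ F (x, y, z) = lam • fderiv ℝ G (x, y, z))
    (hxy : x = y) :
    r * (a + d) * z^2 - p * c * x * z + e * (2 * p + 2 * q + r) * x^2 = 0 := by
  obtain ⟨lam, hlam⟩ := hcrit
  have hxne : x ≠ 0 := hx.ne'
  have hyne : y ≠ 0 := hy.ne'
  have hzne : z ≠ 0 := hz.ne'
  set v₀ : ℝ × ℝ × ℝ := (x, y, z) with hv₀
  have h1 : HasFDerivAt (fun v : ℝ × ℝ × ℝ => v.1)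
      (ContinuousLinearMap.fst ℝ ℝ (ℝ × ℝ)) v₀ := hasFDerivAt_fst
  have h2 : HasFDerivAt (fun v : ℝ × ℝ × ℝ => v.2.1)
      ((ContinuousLinearMap.fst ℝ ℝ ℝ).comp (ContinuousLinearMap.snd ℝ ℝ (ℝ × ℝ))) v₀ :=
    hasFDerivAt_fst.comp v₀ hasFDerivAt_snd
  have h3 : HasFDerivAt (fun v : ℝ × ℝ × ℝ => v.2.2)
      ((ContinuousLinearMap.snd ℝ ℝ ℝ).comp (ContinuousLinearMap.snd ℝ ℝ (ℝ × ℝ))) v₀ :=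
    hasFDerivAt_snd.comp v₀ hasFDerivAt_snd
  -- pieces of F
  have tF1 := ((hasDerivAt_const x a).div (hasDerivAt_id x) hxne).comp_hasFDerivAt v₀ h1
  have tF2 := ((hasDerivAt_const y b).div (hasDerivAt_id y) hyne).comp_hasFDerivAt v₀ h2
  have tF3 := ((hasDerivAt_const z c).div (hasDerivAt_id z) hzne).comp_hasFDerivAt v₀ h3
  have i2 := (((hasDerivAt_pow 2 y).inv (pow_ne_zero 2 hyne)).comp_hasFDerivAt v₀ h2)
  have i3 := (((hasDerivAt_pow 2 z).inv (pow_ne_zero 2 hzne)).comp_hasFDerivAt v₀ h3)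
  have tF4 := (h1.mul i2).const_mul d
  have tF5 := (h1.mul i3).const_mul e
  have tF6 := (h2.mul i3).const_mul f
  have bigF := ((((tF1.add tF2).add tF3).sub tF4).sub tF5).sub tF6
  have hFd : HasFDerivAt F _ v₀ := bigF.congr_of_eventuallyEq
    (Filter.Eventually.of_forall (fun v => by
      rw [hF v]; simp only [Function.comp_apply, id_eq, Pi.add_apply, Pi.sub_apply, Pi.mul_apply,
        Pi.div_apply, Pi.inv_apply]; ring))
  -- pieces of G
  have g1 := h1.rpow_const (p := p) (Or.inl hxne)
  have g2 := h2.rpow_const (p := q) (Or.inl hyne)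
  have g3 := h3.rpow_const (p := r) (Or.inl hzne)
  have bigG := (g1.mul g2).mul g3
  have hGd : HasFDerivAt G _ v₀ := bigG.congr_of_eventuallyEq
    (Filter.Eventually.of_forall (fun v => by rw [hG v]; rfl))
  rw [hFd.fderiv, hGd.fderiv] at hlam
  have E1 := congrArg (fun L : (ℝ × ℝ × ℝ) →L[ℝ] ℝ => L (1, 0, 0)) hlam
  have E3 := congrArg (fun L : (ℝ × ℝ × ℝ) →L[ℝ] ℝ => L (0, 0, 1)) hlam
  simp [ContinuousLinearMap.smul_apply, ContinuousLinearMap.add_apply,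
    ContinuousLinearMap.sub_apply, ContinuousLinearMap.comp_apply,
    ContinuousLinearMap.coe_fst', ContinuousLinearMap.coe_snd',
    smul_eq_mul, hv₀] at E1 E3
  rw [Real.rpow_sub_one hxne] at E1
  rw [Real.rpow_sub_one hzne] at E3
  field_simp at E1 E3
  have hpf : p * f = q * e := by rw [hfval]; field_simp
  subst hxy
  have key : (r * (a + d) * z^2 - p * c * x * z + e * (2 * p + 2 * q + r) * x^2)
      * (x^3 * z^10) = 0 := by
    linear_combination (-(r*x*z^10)) * E1 + (p*x^4*z^10) * E3 + (-(2*x^5*z^10)) * hpf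
  have hne : (x^3 * z^10 : ℝ) ≠ 0 := by positivity
  rcases mul_eq_zero.mp key with h | h
  · exact h
  · exact absurd h hne
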